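/- Let V be a nonzero finite-dimensional real inner product space and let ℓ₁,…,ℓ_s (s ≥ 1) be linear functionals on V; define f(x) := max_{1≤i≤s} ℓ_i(x). If there exists a unit vector x with f(x) < 0, then f attains its minimum on the unit sphere S = {x ∈ V : ‖x‖ = 1}, and the minimizer is unique: there is exactly one h ∈ S such that f(h) ≤ f(x) for all x ∈ S. -/
import Mathlib

open scoped RealInnerProductSpace

/-- Let `V` be a nonzero finite-dimensional real inner product space and
`ℓ₁, …, ℓ_s` (`s ≥ 1`) linear functionals on `V`; let `f x := max_i ℓ_i x`. If there is a
unit vector `x` with `f x < 0`, then `f` attains its minimum on the unit sphere at a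
unique point. -/
theorem min_of_max_linear_on_sphere_exists_unique
    (V : Type*) [NormedAddCommGroup V] [InnerProductSpace ℝ V]
    [FiniteDimensional ℝ V] [Nontrivial V]
    (s : ℕ) (hs : 1 ≤ s) (ℓ : Fin s → V →ₗ[ℝ] ℝ)
    (f : V → ℝ) (hf : ∀ x, f x = ⨆ i : Fin s, ℓ i x)
    (hneg : ∃ x : V, ‖x‖ = 1 ∧ f x < 0) :
    ∃! h : V, ‖h‖ = 1 ∧ ∀ x : V, ‖x‖ = 1 → f h ≤ f x := by
  obtain ⟨x₀, hx₀, hfx₀⟩ := hneg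
  have hne : Nonempty (Fin s) := ⟨⟨0, hs⟩⟩
  have hbdd : ∀ x : V, BddAbove (Set.range fun i : Fin s => ℓ i x) :=
    fun x => (Set.finite_range _).bddAbove
  have hle : ∀ (x : V) (i : Fin s), ℓ i x ≤ f x := by
    intro x i; rw [hf]; exact le_ciSup (hbdd x) i
  have hsup_le : ∀ (x : V) (c : ℝ), (∀ i, ℓ i x ≤ c) → f x ≤ c := by
    intro x c h; rw [hf]; exact ciSup_le h
  have hf0 : f 0 = 0 :=
    le_antisymm (hsup_le 0 0 (by simp)) (by simpa using hle 0 ⟨0, hs⟩)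
  have hsmul : ∀ (c : ℝ), 0 ≤ c → ∀ x : V, f (c • x) = c * f x := by
    intro c hc x
    rw [hf, hf, Real.mul_iSup_of_nonneg hc]
    simp only [map_smul, smul_eq_mul]
  have hadd : ∀ x y : V, f (x + y) ≤ f x + f y := by
    intro x y
    apply hsup_le
    intro i
    rw [map_add]
    exact add_le_add (hle x i) (hle y i)
  -- continuity
  have hcont : Continuous f := by
    have : f = fun x => Finset.univ.sup' ⟨⟨0, hs⟩, Finset.mem_univ _⟩ fun i => ℓ i x := by
      funext x
      rw [hf, Finset.sup'_univ_eq_ciSup]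
    rw [this]
    exact Continuous.finset_sup'_apply _ fun i _ => (ℓ i).continuous_of_finiteDimensional
  -- existence of a minimizer on the sphere
  have hsph : IsCompact (Metric.sphere (0 : V) 1) := isCompact_sphere 0 1
  obtain ⟨h, hhmem, hhmin⟩ := hsph.exists_isMinOn ⟨x₀, by simpa [mem_sphere_zero_iff_norm] using hx₀⟩
    hcont.continuousOn
  have hhnorm : ‖h‖ = 1 := mem_sphere_zero_iff_norm.mp hhmem
  have hhmin' : ∀ x : V, ‖x‖ = 1 → f h ≤ f x := fun x hx =>
    hhmin (mem_sphere_zero_iff_norm.mpr hx)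
  have hm_neg : f h < 0 := lt_of_le_of_lt (hhmin' x₀ hx₀) hfx₀
  refine ⟨h, ⟨hhnorm, hhmin'⟩, ?_⟩
  rintro g ⟨hgnorm, hgmin⟩
  by_contra hgh
  -- f g = f h =: m
  have hm : f g = f h := le_antisymm (hgmin h hhnorm) (hhmin' g hgnorm)
  set m := f h with hmdef
  -- the midpoint
  set z : V := (2 : ℝ)⁻¹ • (g + h) with hz
  have hfz : f z ≤ m := by
    have := hadd g h
    have h2 : f z = (2 : ℝ)⁻¹ * f (g + h) := hsmul _ (by norm_num) _
    rw [h2]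
    nlinarith [hadd g h]
  -- ‖z‖ < 1 since g ≠ h
  have hinner : ⟪g, h⟫ < 1 := by
    rcases lt_or_eq_of_le (real_inner_le_norm g h) with hlt | heq
    · calc ⟪g, h⟫ < ‖g‖ * ‖h‖ := hlt
        _ = 1 := by rw [hgnorm, hhnorm]; ring
    · exfalso
      apply hgh
      have : ⟪g, h⟫ = 1 := by rw [heq, hgnorm, hhnorm]; ring
      exact (inner_eq_one_iff_of_norm_eq_one (𝕜 := ℝ) hgnorm hhnorm).mp this
  have hnormsq : ‖g + h‖ ^ 2 < 4 := by
    have := norm_add_sq_real g h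
    rw [hgnorm, hhnorm] at this
    nlinarith
  have hznorm : ‖z‖ < 1 := by
    have h4 : ‖g + h‖ < 2 := by nlinarith [norm_nonneg (g + h)]
    have : ‖z‖ = (2 : ℝ)⁻¹ * ‖g + h‖ := by
      rw [hz, norm_smul]
      norm_num
    rw [this]; linarith
  -- z ≠ 0 since f z ≤ m < 0 = f 0
  have hz0 : z ≠ 0 := by
    intro h0
    rw [h0, hf0] at hfz
    linarith
  have hznorm_pos : 0 < ‖z‖ := norm_pos_iff.mpr hz0
  -- rescale to the sphere and contradict minimality
  set w : V := ‖z‖⁻¹ • z with hw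
  have hwnorm : ‖w‖ = 1 := by
    rw [hw, norm_smul, norm_inv, norm_norm, inv_mul_cancel₀ (ne_of_gt hznorm_pos)]
  have hfw : f w = ‖z‖⁻¹ * f z := hsmul _ (by positivity) _
  have hlt : f w < m := by
    rw [hfw]
    have h1 : (1 : ℝ) < ‖z‖⁻¹ := (one_lt_inv₀ hznorm_pos).mpr hznorm
    nlinarith
  exact absurd (hhmin' w hwnorm) (not_le.mpr hlt)
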